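/- Let E → M be a (topological or smooth) vector bundle over a Hausdorff manifold M, and let ℝ^× = ℝ \ {0} act on E \ 0_M (the complement of the zero section) by fiberwise scalar multiplication. Then this action is free and proper. -/

import Mathlib

open Bundle Filter Topology Set


/-- The scalar action of `ℝˣ` on the complement of the zero section of a vector bundle
is free and proper. Properness is phrased as: the map `(v, c) ↦ (v, c • v)` from
`(E \ 0) × ℝˣ` to `(E \ 0) × (E \ 0)` pulls compact sets back to compact sets. -/
theorem stmt_7 {B F : Type*} [TopologicalSpace B] [T2Space B]
    [NormedAddCommGroup F] [NormedSpace ℝ F]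
    (E : B → Type*) [TopologicalSpace (Bundle.TotalSpace F E)]
    [∀ b, TopologicalSpace (E b)] [∀ b, AddCommGroup (E b)] [∀ b, Module ℝ (E b)]
    [FiberBundle F E] [VectorBundle ℝ F E] :
    (∀ (c : ℝˣ) (v : Bundle.TotalSpace F E), v.snd ≠ 0 →
        (Bundle.TotalSpace.mk v.proj ((c : ℝ) • v.snd)) = v → c = 1) ∧
    (∀ K : Set (Bundle.TotalSpace F E × Bundle.TotalSpace F E),
      K ⊆ {v | v.snd ≠ 0} ×ˢ {v | v.snd ≠ 0} → IsCompact K →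
      IsCompact {p : Bundle.TotalSpace F E × ℝˣ | p.1.snd ≠ 0 ∧
        (p.1, Bundle.TotalSpace.mk p.1.proj ((p.2 : ℝ) • p.1.snd)) ∈ K}) := by
  constructor
  · rintro c ⟨b, y⟩ hy h
    have h2 : (c : ℝ) • y = y := Bundle.TotalSpace.mk_injective b h
    have hs : ((c : ℝ) - 1) • y = 0 := by
      rw [sub_smul, one_smul, h2, sub_self]
    rcases smul_eq_zero.1 hs with h | h
    · exact Units.ext (by linarith [sub_eq_zero.1 h] : (c : ℝ) = 1)
    · exact absurd h hy
  · intro K hK hKc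
    rw [isCompact_iff_ultrafilter_le_nhds]
    intro 𝒰 h𝒰
    have hS : ∀ᶠ p in (𝒰 : Filter (Bundle.TotalSpace F E × ℝˣ)), p.1.snd ≠ 0 ∧
        (p.1, Bundle.TotalSpace.mk' F p.1.proj ((p.2 : ℝ) • p.1.snd)) ∈ K :=
      le_principal_iff.1 h𝒰
    have hgK : ↑(𝒰.map fun p : Bundle.TotalSpace F E × ℝˣ =>
        (p.1, Bundle.TotalSpace.mk' F p.1.proj ((p.2 : ℝ) • p.1.snd))) ≤ 𝓟 K := by
      rw [Ultrafilter.coe_map, le_principal_iff, mem_map]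
      exact (hS.mono fun p hp => hp.2)
    obtain ⟨⟨v, w⟩, hvwK, hlim⟩ := hKc.ultrafilter_le_nhds _ hgK
    rw [Ultrafilter.coe_map] at hlim
    have hv : Tendsto (fun p : Bundle.TotalSpace F E × ℝˣ => p.1) 𝒰 (𝓝 v) :=
      (continuous_fst.tendsto _).comp hlim
    have hw : Tendsto (fun p : Bundle.TotalSpace F E × ℝˣ =>
        Bundle.TotalSpace.mk' F p.1.proj ((p.2 : ℝ) • p.1.snd)) 𝒰 (𝓝 w) :=
      (continuous_snd.tendsto _).comp hlim
    have hv0 : v.snd ≠ 0 := (hK hvwK).1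
    have hw0 : w.snd ≠ 0 := (hK hvwK).2
    have hb : v.proj ∈ (trivializationAt F E v.proj).baseSet :=
      FiberBundle.mem_baseSet_trivializationAt F E v.proj
    set e := trivializationAt F E v.proj with he
    have hwb : w.proj = v.proj := by
      have h1 := ((FiberBundle.continuous_proj F E).tendsto v).comp hv
      have h2 := ((FiberBundle.continuous_proj F E).tendsto w).comp hw
      exact tendsto_nhds_unique h2 h1
    have hvsrc : v ∈ e.source := e.mem_source.2 hb
    have hwsrc : w ∈ e.source := e.mem_source.2 (hwb ▸ hb)
    have hev1 : ∀ᶠ p in (𝒰 : Filter (Bundle.TotalSpace F E × ℝˣ)), p.1 ∈ e.source :=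
      hv (e.open_source.mem_nhds hvsrc)
    have hev : Tendsto (fun p : Bundle.TotalSpace F E × ℝˣ => (e p.1).2) 𝒰 (𝓝 (e v).2) :=
      (continuous_snd.tendsto _).comp
        ((e.continuousOn.continuousAt (e.open_source.mem_nhds hvsrc)).tendsto.comp hv)
    have hew : Tendsto (fun p : Bundle.TotalSpace F E × ℝˣ =>
        (e (Bundle.TotalSpace.mk' F p.1.proj ((p.2 : ℝ) • p.1.snd))).2) 𝒰 (𝓝 (e w).2) :=
      (continuous_snd.tendsto _).comp
        ((e.continuousOn.continuousAt (e.open_source.mem_nhds hwsrc)).tendsto.comp hw)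
    have key : ∀ᶠ p in (𝒰 : Filter (Bundle.TotalSpace F E × ℝˣ)),
        (e (Bundle.TotalSpace.mk' F p.1.proj ((p.2 : ℝ) • p.1.snd))).2
          = (p.2 : ℝ) • (e p.1).2 := by
      filter_upwards [hev1] with p hp
      have hbp : p.1.proj ∈ e.baseSet := e.mem_source.1 hp
      exact (e.linear ℝ hbp).map_smul (p.2 : ℝ) p.1.snd
    have hsmul : Tendsto (fun p : Bundle.TotalSpace F E × ℝˣ =>
        (p.2 : ℝ) • (e p.1).2) 𝒰 (𝓝 (e w).2) := hew.congr' key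
    have hnev : (e v).2 ≠ 0 := by
      intro h0
      apply hv0
      have := (e.continuousLinearEquivAt ℝ v.proj hb).map_eq_zero_iff.1
        (by rw [Trivialization.continuousLinearEquivAt_apply]; exact h0)
      exact this
    have hnew : (e w).2 ≠ 0 := by
      intro h0
      apply hw0
      have := (e.continuousLinearEquivAt ℝ w.proj (hwb ▸ hb)).map_eq_zero_iff.1
        (by rw [Trivialization.continuousLinearEquivAt_apply]; exact h0)
      exact this
    have hnv : ‖(e v).2‖ ≠ 0 := norm_ne_zero_iff.2 hnev
    have habs : Tendsto (fun p : Bundle.TotalSpace F E × ℝˣ => |(p.2 : ℝ)|) 𝒰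
        (𝓝 (‖(e w).2‖ / ‖(e v).2‖)) := by
      have h1 : Tendsto (fun p : Bundle.TotalSpace F E × ℝˣ =>
          ‖(p.2 : ℝ) • (e p.1).2‖ / ‖(e p.1).2‖) 𝒰 (𝓝 (‖(e w).2‖ / ‖(e v).2‖)) :=
        hsmul.norm.div hev.norm hnv
      refine h1.congr' ?_
      have hne : ∀ᶠ p in (𝒰 : Filter (Bundle.TotalSpace F E × ℝˣ)), (e p.1).2 ≠ 0 :=
        hev (isOpen_compl_singleton.mem_nhds hnev)
      filter_upwards [hne] with p hp
      rw [norm_smul, Real.norm_eq_abs, mul_div_assoc,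
        div_self (norm_ne_zero_iff.2 hp), mul_one]
    set r := ‖(e w).2‖ / ‖(e v).2‖ with hr
    have hrpos : 0 < r := div_pos (norm_pos_iff.2 hnew) (norm_pos_iff.2 hnev)
    have hcpt : ∀ᶠ p in (𝒰 : Filter (Bundle.TotalSpace F E × ℝˣ)),
        (p.2 : ℝ) ∈ Set.Icc (-(2 * r)) (2 * r) := by
      have h2 : (fun p : Bundle.TotalSpace F E × ℝˣ => |(p.2 : ℝ)|) ⁻¹' Set.Iio (2 * r)
          ∈ (𝒰 : Filter (Bundle.TotalSpace F E × ℝˣ)) := habs (Iio_mem_nhds (by linarith))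
      filter_upwards [h2] with p hp
      have hlt : |(p.2 : ℝ)| < 2 * r := hp
      exact Set.mem_Icc.2 (abs_le.1 hlt.le)
    obtain ⟨c₀, _, hc₀⟩ := isCompact_Icc.ultrafilter_le_nhds
      (𝒰.map fun p : Bundle.TotalSpace F E × ℝˣ => (p.2 : ℝ))
      (by rw [Ultrafilter.coe_map, le_principal_iff, mem_map]; exact hcpt)
    rw [Ultrafilter.coe_map] at hc₀
    have hc₀' : Tendsto (fun p : Bundle.TotalSpace F E × ℝˣ => (p.2 : ℝ)) 𝒰 (𝓝 c₀) := hc₀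
    have hc0r : |c₀| = r := tendsto_nhds_unique hc₀'.abs habs
    have hc0 : c₀ ≠ 0 := by
      intro h; rw [h, abs_zero] at hc0r; linarith
    have hu : Tendsto (fun p : Bundle.TotalSpace F E × ℝˣ => p.2) 𝒰 (𝓝 (Units.mk0 c₀ hc0)) := by
      rw [Units.isEmbedding_val₀.tendsto_nhds_iff]
      exact hc₀'
    have hwe : Bundle.TotalSpace.mk' F v.proj (c₀ • v.snd) = w := by
      have hmem : (Bundle.TotalSpace.mk' F v.proj (c₀ • v.snd)) ∈ e.source := e.mem_source.2 hb
      refine e.injOn hmem hwsrc ?_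
      have hew2 : (e w).2 = c₀ • (e v).2 := tendsto_nhds_unique hsmul (hc₀'.smul hev)
      have hfst : (e (Bundle.TotalSpace.mk' F v.proj (c₀ • v.snd))).1 = (e w).1 := by
        rw [e.coe_fst hmem, e.coe_fst hwsrc, hwb]
      have hsnd : (e (Bundle.TotalSpace.mk' F v.proj (c₀ • v.snd))).2 = (e w).2 := by
        rw [hew2]
        exact (e.linear ℝ hb).map_smul c₀ v.snd
      exact Prod.ext hfst hsnd
    refine ⟨(v, Units.mk0 c₀ hc0), ⟨hv0, ?_⟩, ?_⟩
    · show (v, Bundle.TotalSpace.mk' F v.proj ((Units.mk0 c₀ hc0 : ℝ) • v.snd)) ∈ K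
      rw [Units.val_mk0, hwe]
      exact hvwK
    · have := hv.prodMk_nhds hu
      exact this
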